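/- Every finite completely 0-simple semigroup is isomorphic to a Rees matrix semigroup ℳ(G,Q) for some finite group G and some regular sandwich matrix Q with entries in G⁰ = G ∪ {0}. -/

import Mathlib

/-- A (two-sided) ideal of a semigroup. -/
def IsIdealSet {S : Type*} [Semigroup S] (I : Set S) : Prop :=
  I.Nonempty ∧ ∀ a ∈ I, ∀ s : S, s * a ∈ I ∧ a * s ∈ I

/-- A finite semigroup with zero is completely 0-simple if it is nontrivial, every element
is regular, and its only nonempty ideals are `{0}` and `S`. -/
def CompletelyZeroSimple (S : Type*) [SemigroupWithZero S] : Prop :=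
  (∃ a : S, a ≠ 0) ∧ (∀ a : S, ∃ b : S, a * b * a = a) ∧
    ∀ I : Set S, IsIdealSet I → I = {0} ∨ I = Set.univ

/-- Multiplication in the Rees matrix semigroup `ℳ(G,Q)`: the elements are the triples
`[i, g, λ]` (encoded as `some (i, g, λ)`) together with the zero (encoded as `none`);
`[r,g,α]·[s,h,β] = [r, g·Q(α,s)·h, β]` if `Q(α,s) ≠ 0`, and `= 0` otherwise. -/
def reesMul {G : Type*} [Mul G] {m n : ℕ} (Q : Fin m → Fin n → Option G) :
    Option (Fin n × G × Fin m) → Option (Fin n × G × Fin m) → Option (Fin n × G × Fin m)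
  | some (r, g, α), some (s, h, β) => (Q α s).map fun q => (r, g * q * h, β)
  | _, _ => none

/-- A sandwich matrix is regular if every row and every column has a nonzero entry. -/
def ReesRegular {G : Type*} {m n : ℕ} (Q : Fin m → Fin n → Option G) : Prop :=
  (∀ lam : Fin m, ∃ i, (Q lam i).isSome) ∧ ∀ i : Fin n, ∃ lam, (Q lam i).isSome

namespace ReesAux

section Pow
variable {S : Type*} [Semigroup S]

/-- `pw p n = p^(n+1)` in a semigroup. -/
def pw (p : S) : ℕ → S
  | 0 => p
  | n + 1 => pw p n * p

lemma pw_mul_comm (p : S) (n : ℕ) : p * pw p n = pw p n * p := by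
  induction n with
  | zero => rfl
  | succ n ih => show p * (pw p n * p) = _; rw [← mul_assoc, ih]; rfl

lemma pw_add (p : S) (m n : ℕ) : pw p m * pw p n = pw p (m + n + 1) := by
  induction n with
  | zero => rfl
  | succ n ih =>
    show pw p m * (pw p n * p) = _
    rw [← mul_assoc, ih]; rfl

lemma pw_shift (p : S) {i j : ℕ} (hij : pw p i = pw p j) (k : ℕ) :
    pw p (i + k) = pw p (j + k) := by
  induction k with
  | zero => simpa using hij
  | succ k ih =>
    show pw p (i + k) * p = pw p (j + k) * p
    rw [ih]

lemma exists_idem_pow_aux (p : S) {i d : ℕ} (hd : 0 < d)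
    (hij : pw p i = pw p (i + d)) : ∃ n, pw p n * pw p n = pw p n := by
  have step : ∀ t : ℕ, ∀ m : ℕ, i ≤ m → pw p m = pw p (m + t * d) := by
    intro t
    induction t with
    | zero => intro m _; simp
    | succ t ih =>
      intro m hm
      have h1 : pw p m = pw p (m + d) := by
        have := pw_shift p hij (m - i)
        have e1 : i + (m - i) = m := by omega
        have e2 : i + d + (m - i) = m + d := by omega
        rw [e1, e2] at this; exact this
      rw [h1, ih (m + d) (by omega)]
      congr 1; ring
  have hN : i + 1 ≤ (i + 1) * d := Nat.le_mul_of_pos_right _ hd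
  refine ⟨(i + 1) * d - 1, ?_⟩
  rw [pw_add]
  have h1 : (i + 1) * d - 1 + ((i + 1) * d - 1) + 1 = ((i + 1) * d - 1) + (i + 1) * d := by
    omega
  rw [h1]
  exact (step (i + 1) _ (by omega)).symm

lemma exists_idem_pow [Finite S] (p : S) : ∃ n, pw p n * pw p n = pw p n := by
  obtain ⟨i, j, hne, hij⟩ := Finite.exists_ne_map_eq_of_infinite (pw p)
  rcases lt_or_gt_of_ne hne with h | h
  · exact exists_idem_pow_aux p (d := j - i) (by omega)
      (by rw [hij]; congr 1; omega)
  · exact exists_idem_pow_aux p (d := i - j) (by omega)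
      (by rw [← hij]; congr 1; omega)

/-- Stability: if `x = p * x * q` then for some `n`,
`pw p n * x = x` and `x * pw q n = x`. -/
lemma stab [Finite S] {x p q : S} (h : x = p * x * q) :
    ∃ n, pw p n * x = x ∧ x * pw q n = x := by
  have key : ∀ n, x = pw p n * x * pw q n := by
    intro n
    induction n with
    | zero => exact h
    | succ n ih =>
      calc x = p * x * q := h
      _ = p * (pw p n * x * pw q n) * q := by rw [← ih]
      _ = pw p (n+1) * x * pw q (n+1) := by
          show _ = pw p n * p * x * (pw q n * q)
          rw [← pw_mul_comm]
          simp [mul_assoc]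
  obtain ⟨n, hn⟩ := exists_idem_pow p
  have h1 : pw p n * x = x := by
    calc pw p n * x = pw p n * (pw p n * x * pw q n) := by rw [← key n]
    _ = (pw p n * pw p n) * x * pw q n := by simp [mul_assoc]
    _ = pw p n * x * pw q n := by rw [hn]
    _ = x := (key n).symm
  refine ⟨n, h1, ?_⟩
  calc x * pw q n = (pw p n * x) * pw q n := by rw [h1]
  _ = x := (key n).symm

end Pow

section Rel
variable {S : Type*} [SemigroupWithZero S]

/-- Green's `R`-relation (for regular semigroups). -/
def Rr (a b : S) : Prop := (∃ u, a = b * u) ∧ (∃ v, b = a * v)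

/-- Green's `L`-relation (for regular semigroups). -/
def Lr (a b : S) : Prop := (∃ u, a = u * b) ∧ (∃ v, b = v * a)

lemma Rr.symm {a b : S} (h : Rr a b) : Rr b a := ⟨h.2, h.1⟩
lemma Lr.symm {a b : S} (h : Lr a b) : Lr b a := ⟨h.2, h.1⟩

lemma Rr.trans {a b c : S} (h1 : Rr a b) (h2 : Rr b c) : Rr a c := by
  obtain ⟨⟨u1, hu1⟩, ⟨v1, hv1⟩⟩ := h1
  obtain ⟨⟨u2, hu2⟩, ⟨v2, hv2⟩⟩ := h2
  exact ⟨⟨u2 * u1, by rw [hu1, hu2, mul_assoc]⟩, ⟨v1 * v2, by rw [hv2, hv1, mul_assoc]⟩⟩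

lemma Lr.trans {a b c : S} (h1 : Lr a b) (h2 : Lr b c) : Lr a c := by
  obtain ⟨⟨u1, hu1⟩, ⟨v1, hv1⟩⟩ := h1
  obtain ⟨⟨u2, hu2⟩, ⟨v2, hv2⟩⟩ := h2
  exact ⟨⟨u1 * u2, by rw [hu1, hu2, mul_assoc]⟩, ⟨v2 * v1, by rw [hv2, hv1, mul_assoc]⟩⟩

lemma Rr.refl (hreg : ∀ a : S, ∃ b : S, a * b * a = a) (a : S) : Rr a a := by
  obtain ⟨b, hb⟩ := hreg a
  exact ⟨⟨b * a, by rw [← mul_assoc, hb]⟩, ⟨b * a, by rw [← mul_assoc, hb]⟩⟩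

lemma Lr.refl (hreg : ∀ a : S, ∃ b : S, a * b * a = a) (a : S) : Lr a a := by
  obtain ⟨b, hb⟩ := hreg a
  exact ⟨⟨a * b, hb.symm⟩, ⟨a * b, hb.symm⟩⟩

/-- `S a S = S` for `a ≠ 0` in a completely 0-simple semigroup. -/
lemma SaS (hS : CompletelyZeroSimple S) {a : S} (ha : a ≠ 0) (x : S) :
    ∃ s t, s * a * t = x := by
  obtain ⟨-, hreg, hideal⟩ := hS
  set I : Set S := {y | ∃ s t, s * a * t = y} with hI
  obtain ⟨b, hb⟩ := hreg a
  have haI : a ∈ I := by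
    refine ⟨a * b, b * a, ?_⟩
    calc a * b * a * (b * a) = (a * b * a) * b * a := by simp [mul_assoc]
    _ = a := by rw [hb, hb]
  have hIdeal : IsIdealSet I := by
    refine ⟨⟨a, haI⟩, ?_⟩
    rintro y ⟨s, t, rfl⟩ z
    exact ⟨⟨z * s, t, by simp [mul_assoc]⟩, ⟨s, t * z, by simp [mul_assoc]⟩⟩
  rcases hideal I hIdeal with h | h
  · exfalso; rw [h] at haI; exact ha haI
  · have : x ∈ I := by rw [h]; trivial
    exact this

/-- Key lemma: if `a*b ≠ 0` then `ab R a` and `ab L b`. -/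
lemma hB [Fintype S] (hS : CompletelyZeroSimple S) {a b : S} (hab : a * b ≠ 0) :
    Rr (a * b) a ∧ Lr (a * b) b := by
  obtain ⟨s, t, hst⟩ := SaS hS hab a
  obtain ⟨s', t', hst'⟩ := SaS hS hab b
  constructor
  · refine ⟨⟨b, rfl⟩, ?_⟩
    have h1 : a = s * a * (b * t) := by
      conv_lhs => rw [← hst]
      simp [mul_assoc]
    obtain ⟨n, -, h2⟩ := stab h1
    have h3 : ∀ m, ∃ c, pw (b * t) m = b * c := by
      intro m
      induction m with
      | zero => exact ⟨t, rfl⟩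
      | succ m ih =>
        obtain ⟨c, hc⟩ := ih
        exact ⟨c * (b * t), by show pw (b*t) m * (b*t) = _; rw [hc, mul_assoc]⟩
    obtain ⟨c, hc⟩ := h3 n
    exact ⟨c, by rw [mul_assoc, ← hc, h2]⟩
  · refine ⟨⟨a, rfl⟩, ?_⟩
    have h1 : b = (s' * a) * b * t' := by
      conv_lhs => rw [← hst']
      simp [mul_assoc]
    obtain ⟨n, h2, -⟩ := stab h1
    have h3 : ∀ m, ∃ c, pw (s' * a) m = c * a := by
      intro m
      induction m with
      | zero => exact ⟨s', rfl⟩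
      | succ m ih =>
        obtain ⟨c, hc⟩ := ih
        exact ⟨c * a * s', by show pw (s'*a) m * (s'*a) = _; rw [hc]; simp [mul_assoc]⟩
    obtain ⟨c, hc⟩ := h3 n
    exact ⟨c, by rw [← mul_assoc, ← hc, h2]⟩

end Rel

section Hgroup
variable {S : Type*} [SemigroupWithZero S] [Fintype S]

/-- Membership in the `H`-class of the idempotent `e`. -/
def Hmem (e x : S) : Prop := Rr x e ∧ Lr x e

variable {e : S}

omit [Fintype S] in
lemma Hmem.ne_zero (he0 : e ≠ 0) {x : S} (hx : Hmem e x) : x ≠ 0 := by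
  intro h
  obtain ⟨v, hv⟩ := hx.1.2
  rw [h, zero_mul] at hv
  exact he0 hv

omit [Fintype S] in
lemma Hmem.e_mul (he : e * e = e) {x : S} (hx : Hmem e x) : e * x = x := by
  obtain ⟨u, hu⟩ := hx.1.1
  rw [hu, ← mul_assoc, he]

omit [Fintype S] in
lemma Hmem.mul_e (he : e * e = e) {x : S} (hx : Hmem e x) : x * e = x := by
  obtain ⟨u, hu⟩ := hx.2.1
  rw [hu, mul_assoc, he]

omit [Fintype S] in
lemma Hmem.one (hreg : ∀ a : S, ∃ b : S, a * b * a = a) : Hmem e e :=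
  ⟨Rr.refl hreg e, Lr.refl hreg e⟩

lemma Hmem.mul_mem (hS : CompletelyZeroSimple S) (he : e * e = e) (he0 : e ≠ 0)
    {x y : S} (hx : Hmem e x) (hy : Hmem e y) : x * y ≠ 0 ∧ Hmem e (x * y) := by
  obtain ⟨v, hv⟩ := hy.1.2
  have hxy : x * y ≠ 0 := by
    intro h
    have h2 : x * e = x := hx.mul_e he
    rw [hv, ← mul_assoc, h, zero_mul] at h2
    exact (Hmem.ne_zero he0 hx) h2.symm
  have hb := hB hS hxy
  exact ⟨hxy, hb.1.trans hx.1, hb.2.trans hy.2⟩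

lemma Hmem.pw_mem (hS : CompletelyZeroSimple S) (he : e * e = e) (he0 : e ≠ 0)
    {x : S} (hx : Hmem e x) : ∀ n, Hmem e (pw x n)
  | 0 => hx
  | n + 1 => (Hmem.mul_mem hS he he0 (Hmem.pw_mem hS he he0 hx n) hx).2

lemma Hmem.exists_inv (hS : CompletelyZeroSimple S) (he : e * e = e) (he0 : e ≠ 0)
    {x : S} (hx : Hmem e x) : ∃ y, Hmem e y ∧ x * y = e ∧ y * x = e := by
  obtain ⟨n, hn⟩ := exists_idem_pow x
  have hfm : Hmem e (pw x n) := hx.pw_mem hS he he0 n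
  have hfe : pw x n = e := by
    obtain ⟨v, hv⟩ := hfm.2.2
    have h1 : e * pw x n = pw x n := hfm.e_mul he
    symm
    calc e = v * pw x n := hv
    _ = v * (pw x n * pw x n) := by rw [hn]
    _ = (v * pw x n) * pw x n := by rw [mul_assoc]
    _ = e * pw x n := by rw [← hv]
    _ = pw x n := h1
  match n, hfe with
  | 0, hfe =>
    have hxe : x = e := hfe
    exact ⟨e, Hmem.one hS.2.1, by rw [hxe, he], by rw [hxe, he]⟩
  | (m + 1), hfe =>
    refine ⟨pw x m, hx.pw_mem hS he he0 m, ?_, hfe⟩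
    rw [pw_mul_comm]
    exact hfe

/-- The group structure on the `H`-class of the idempotent `e`. -/
noncomputable def groupH (hS : CompletelyZeroSimple S) (he : e * e = e) (he0 : e ≠ 0) :
    Group {x : S // Hmem e x} := by
  letI : Mul {x : S // Hmem e x} :=
    ⟨fun x y => ⟨x.1 * y.1, (Hmem.mul_mem hS he he0 x.2 y.2).2⟩⟩
  letI : One {x : S // Hmem e x} := ⟨⟨e, Hmem.one hS.2.1⟩⟩
  letI : Inv {x : S // Hmem e x} :=
    ⟨fun x => ⟨Classical.choose (x.2.exists_inv hS he he0),
      (Classical.choose_spec (x.2.exists_inv hS he he0)).1⟩⟩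
  refine Group.ofLeftAxioms ?_ ?_ ?_
  · intro a b c; exact Subtype.ext (mul_assoc a.1 b.1 c.1)
  · intro a; exact Subtype.ext (a.2.e_mul he)
  · intro a; exact Subtype.ext (Classical.choose_spec (a.2.exists_inv hS he he0)).2.2

lemma groupH_mul_val (hS : CompletelyZeroSimple S) (he : e * e = e) (he0 : e ≠ 0)
    (x y : {x : S // Hmem e x}) :
    letI := groupH hS he he0
    (x * y).1 = x.1 * y.1 := rfl

end Hgroup

/-- Transport the Rees matrix presentation along a shrinking of the group to `Type 0`. -/
lemma transport {S : Type*} [SemigroupWithZero S] {m n : ℕ} {G : Type*} [Group G] [Finite G]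
    (Q : Fin m → Fin n → Option G) (hQ : ReesRegular Q)
    (φ : S ≃ Option (Fin n × G × Fin m))
    (hφ : ∀ x y : S, φ (x * y) = reesMul Q (φ x) (φ y)) :
    ∃ (G' : Type) (_ : Group G') (_ : Fintype G')
      (Q' : Fin m → Fin n → Option G'), ReesRegular Q' ∧
      ∃ ψ : S ≃ Option (Fin n × G' × Fin m),
        ∀ x y : S, ψ (x * y) = reesMul Q' (ψ x) (ψ y) := by
  obtain ⟨G', iG', iF', ⟨μ⟩⟩ := Finite.exists_type_univ_nonempty_mulEquiv.{_, 0} G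
  refine ⟨G', iG', iF', fun lam i => (Q lam i).map μ, ⟨?_, ?_⟩, ?_⟩
  · intro lam
    obtain ⟨i, hi⟩ := hQ.1 lam
    exact ⟨i, by rw [Option.isSome_map]; exact hi⟩
  · intro i
    obtain ⟨lam, hlam⟩ := hQ.2 i
    exact ⟨lam, by rw [Option.isSome_map]; exact hlam⟩
  · let T : Option (Fin n × G × Fin m) ≃ Option (Fin n × G' × Fin m) :=
      Equiv.optionCongr ((Equiv.refl (Fin n)).prodCongr
        (μ.toEquiv.prodCongr (Equiv.refl (Fin m))))
    have hT : ∀ o, T o = o.map (fun p => (p.1, μ p.2.1, p.2.2)) := by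
      intro o
      rcases o with _ | ⟨i, g, lam⟩ <;> rfl
    refine ⟨φ.trans T, ?_⟩
    intro x y
    simp only [Equiv.trans_apply, hφ]
    generalize φ x = o1
    generalize φ y = o2
    rcases o1 with _ | ⟨i, g, lam⟩
    · rcases o2 with _ | ⟨j, h, mu⟩ <;> simp [hT, reesMul]
    rcases o2 with _ | ⟨j, h, mu⟩
    · simp [hT, reesMul]
    · rcases hQl : Q lam j with _ | p <;>
        simp [hT, reesMul, hQl, Function.comp, map_mul]

end ReesAux

open ReesAux in
/-- **Rees Matrix Theorem.** Every finite completely 0-simple semigroup is isomorphic to a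
Rees matrix semigroup `ℳ(G,Q)` over a finite group `G` with a regular sandwich matrix `Q`. -/
theorem rees_matrix_theorem {S : Type*} [SemigroupWithZero S] [Fintype S]
    (hS : CompletelyZeroSimple S) :
    ∃ (m n : ℕ) (G : Type) (_ : Group G) (_ : Fintype G)
      (Q : Fin m → Fin n → Option G), ReesRegular Q ∧
      ∃ φ : S ≃ Option (Fin n × G × Fin m),
        ∀ x y : S, φ (x * y) = reesMul Q (φ x) (φ y) := by
  classical
  obtain ⟨a0, ha0⟩ := hS.1
  have hreg := hS.2.1
  obtain ⟨b0, hb0⟩ := hreg a0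
  -- the idempotent e
  set e : S := a0 * b0 with hedef
  have he : e * e = e := by rw [hedef, ← mul_assoc, hb0]
  have he0 : e ≠ 0 := by
    intro h
    have h1 : e * a0 = a0 := by rw [hedef, hb0]
    rw [h, zero_mul] at h1
    exact ha0 h1.symm
  -- R- and L-classes of nonzero elements
  let NZ := {x : S // x ≠ 0}
  let sR : Setoid NZ := ⟨fun a b => Rr a.1 b.1,
    ⟨fun a => Rr.refl hreg a.1, fun h => h.symm, fun h1 h2 => h1.trans h2⟩⟩
  let sL : Setoid NZ := ⟨fun a b => Lr a.1 b.1,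
    ⟨fun a => Lr.refl hreg a.1, fun h => h.symm, fun h1 h2 => h1.trans h2⟩⟩
  obtain ⟨nR, ⟨eR⟩⟩ := Finite.exists_equiv_fin (Quotient sR)
  obtain ⟨nL, ⟨eL⟩⟩ := Finite.exists_equiv_fin (Quotient sL)
  -- existence of nice representatives
  have repR : ∀ a : S, a ≠ 0 → ∃ c, c ≠ 0 ∧ Rr c a ∧ Lr c e := by
    intro a ha
    obtain ⟨u, v, huv⟩ := SaS hS ha e
    have hav : a * v ≠ 0 := by
      intro h
      rw [mul_assoc, h, mul_zero] at huv
      exact he0 huv.symm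
    refine ⟨a * v, hav, (hB hS hav).1, ?_⟩
    have huc : u * (a * v) ≠ 0 := by rw [← mul_assoc, huv]; exact he0
    have h2 := (hB hS huc).2
    have hE : u * (a * v) = e := by rw [← mul_assoc]; exact huv
    rw [hE] at h2
    exact h2.symm
  have repL : ∀ a : S, a ≠ 0 → ∃ c, c ≠ 0 ∧ Lr c a ∧ Rr c e := by
    intro a ha
    obtain ⟨u, v, huv⟩ := SaS hS ha e
    have hua : u * a ≠ 0 := by
      intro h
      rw [h, zero_mul] at huv
      exact he0 huv.symm
    refine ⟨u * a, hua, (hB hS hua).2, ?_⟩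
    have huc : (u * a) * v ≠ 0 := by rw [huv]; exact he0
    have h2 := (hB hS huc).1
    rw [huv] at h2
    exact h2.symm
  -- chosen representatives r i ∈ R_i ∩ L_e and q lam ∈ L_lam ∩ R_e
  have hrex : ∀ i : Fin nR, ∃ c, c ≠ 0 ∧ Rr c ((eR.symm i).out.val) ∧ Lr c e :=
    fun i => repR _ (eR.symm i).out.2
  choose r hr0 hrR hrL using hrex
  have hqex : ∀ lam : Fin nL, ∃ c, c ≠ 0 ∧ Lr c ((eL.symm lam).out.val) ∧ Rr c e :=
    fun lam => repL _ (eL.symm lam).out.2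
  choose q hq0 hqL hqR using hqex
  -- class maps
  let iOf : ∀ a : S, a ≠ 0 → Fin nR := fun a ha => eR (Quotient.mk sR ⟨a, ha⟩)
  let lOf : ∀ a : S, a ≠ 0 → Fin nL := fun a ha => eL (Quotient.mk sL ⟨a, ha⟩)
  have hiOf_eq : ∀ (a : S) (ha : a ≠ 0) (i : Fin nR), Rr a (r i) → iOf a ha = i := by
    intro a ha i hai
    have h1 : Rr a ((eR.symm i).out.val) := hai.trans (hrR i)
    have h2 : Quotient.mk sR ⟨a, ha⟩ = Quotient.mk sR (eR.symm i).out := Quotient.sound h1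
    show eR (Quotient.mk sR ⟨a, ha⟩) = i
    rw [h2, Quotient.out_eq (eR.symm i), Equiv.apply_symm_apply]
  have hlOf_eq : ∀ (a : S) (ha : a ≠ 0) (lam : Fin nL), Lr a (q lam) → lOf a ha = lam := by
    intro a ha lam hal
    have h1 : Lr a ((eL.symm lam).out.val) := hal.trans (hqL lam)
    have h2 : Quotient.mk sL ⟨a, ha⟩ = Quotient.mk sL (eL.symm lam).out := Quotient.sound h1
    show eL (Quotient.mk sL ⟨a, ha⟩) = lam
    rw [h2, Quotient.out_eq (eL.symm lam), Equiv.apply_symm_apply]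
  have hrOf : ∀ (a : S) (ha : a ≠ 0), Rr (r (iOf a ha)) a := by
    intro a ha
    refine (hrR (iOf a ha)).trans ?_
    have h3 : eR.symm (iOf a ha) = Quotient.mk sR ⟨a, ha⟩ := Equiv.symm_apply_apply _ _
    rw [h3]
    have h4 := Quotient.exact (Quotient.out_eq (Quotient.mk sR (⟨a, ha⟩ : NZ)))
    exact h4
  have hqOf : ∀ (a : S) (ha : a ≠ 0), Lr (q (lOf a ha)) a := by
    intro a ha
    refine (hqL (lOf a ha)).trans ?_
    have h3 : eL.symm (lOf a ha) = Quotient.mk sL ⟨a, ha⟩ := Equiv.symm_apply_apply _ _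
    rw [h3]
    have h4 := Quotient.exact (Quotient.out_eq (Quotient.mk sL (⟨a, ha⟩ : NZ)))
    exact h4
  -- local left/right units
  choose V hV using fun i => (hrL i).2
  let X : Fin nR → S := fun i => e * V i
  have hXr : ∀ i, X i * r i = e := by
    intro i
    show e * V i * r i = e
    rw [mul_assoc, ← hV i, he]
  have hre : ∀ i, r i * e = r i := by
    intro i
    obtain ⟨u, hu⟩ := (hrL i).1
    rw [hu, mul_assoc, he]
  choose w hw using fun lam => (hqR lam).2
  let W : Fin nL → S := fun lam => w lam * e
  have hqW : ∀ lam, q lam * W lam = e := by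
    intro lam
    show q lam * (w lam * e) = e
    rw [← mul_assoc, ← hw, he]
  have heq : ∀ lam, e * q lam = q lam := by
    intro lam
    obtain ⟨u, hu⟩ := (hqR lam).1
    rw [hu, ← mul_assoc, he]
  -- the core computations
  have hLfix : ∀ (i : Fin nR) (a : S), Rr (r i) a → r i * (X i * a) = a := by
    intro i a hra
    obtain ⟨v, hv⟩ := hra.2
    rw [hv, ← mul_assoc (X i) (r i) v, hXr i, ← mul_assoc, hre]
  have hRfix : ∀ (lam : Fin nL) (a : S), Lr (q lam) a → a * (W lam * q lam) = a := by
    intro lam a hqa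
    obtain ⟨v, hv⟩ := hqa.2
    rw [hv, mul_assoc v (q lam), ← mul_assoc (q lam) (W lam), hqW, heq]
  let g0 : ∀ (a : S), a ≠ 0 → S := fun a ha => X (iOf a ha) * a * W (lOf a ha)
  have recon : ∀ (a : S) (ha : a ≠ 0), r (iOf a ha) * g0 a ha * q (lOf a ha) = a := by
    intro a ha
    show r (iOf a ha) * (X (iOf a ha) * a * W (lOf a ha)) * q (lOf a ha) = a
    have h1 : r (iOf a ha) * (X (iOf a ha) * a * W (lOf a ha)) * q (lOf a ha)
        = r (iOf a ha) * (X (iOf a ha) * (a * (W (lOf a ha) * q (lOf a ha)))) := by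
      simp [mul_assoc]
    rw [h1, hRfix _ _ (hqOf a ha), hLfix _ _ (hrOf a ha)]
  have hg0 : ∀ (a : S) (ha : a ≠ 0), g0 a ha ≠ 0 ∧ Hmem e (g0 a ha) := by
    intro a ha
    have hgne : g0 a ha ≠ 0 := by
      intro h
      have h1 := recon a ha
      rw [h, mul_zero, zero_mul] at h1
      exact ha h1.symm
    refine ⟨hgne, ?_, ?_⟩
    · have h1 : X (iOf a ha) * (a * W (lOf a ha)) ≠ 0 := by
        intro h
        apply hgne
        show X (iOf a ha) * a * W (lOf a ha) = 0
        rw [mul_assoc]; exact h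
      have h2 := (hB hS h1).1
      have h3 : Rr (X (iOf a ha)) e :=
        ⟨⟨V (iOf a ha), rfl⟩, ⟨r (iOf a ha), (hXr _).symm⟩⟩
      have h4 : g0 a ha = X (iOf a ha) * (a * W (lOf a ha)) := mul_assoc _ _ _
      rw [← h4] at h2
      exact h2.trans h3
    · have h1 : (X (iOf a ha) * a) * W (lOf a ha) ≠ 0 := hgne
      have h2 := (hB hS h1).2
      have h3 : Lr (W (lOf a ha)) e :=
        ⟨⟨w (lOf a ha), rfl⟩, ⟨q (lOf a ha), (hqW _).symm⟩⟩
      exact h2.trans h3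
  have uniq : ∀ (i : Fin nR) (lam : Fin nL) (g : S), Hmem e g →
      r i * g * q lam ≠ 0 ∧ Rr (r i * g * q lam) (r i) ∧ Lr (r i * g * q lam) (q lam) ∧
        X i * (r i * g * q lam) * W lam = g := by
    intro i lam g hg
    have hgne : g ≠ 0 := hg.ne_zero he0
    have hrg : r i * g ≠ 0 := by
      intro h
      have h1 : e * g = g := hg.e_mul he
      rw [← hXr i, mul_assoc, h, mul_zero] at h1
      exact hgne h1.symm
    have hc : r i * g * q lam ≠ 0 := by
      intro h
      have h1 : g * e = g := hg.mul_e he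
      rw [← hqW lam] at h1
      have h2 : r i * g = (r i * g * q lam) * W lam := by
        calc r i * g = r i * (g * (q lam * W lam)) := by rw [h1]
        _ = r i * g * q lam * W lam := by simp [mul_assoc]
      rw [h, zero_mul] at h2
      exact hrg h2
    have hRc : Rr (r i * g * q lam) (r i) := by
      have h1 : r i * (g * q lam) ≠ 0 := by rw [← mul_assoc]; exact hc
      have h2 := (hB hS h1).1
      rw [← mul_assoc] at h2
      exact h2
    have hLc : Lr (r i * g * q lam) (q lam) := (hB hS hc).2
    refine ⟨hc, hRc, hLc, ?_⟩
    calc X i * (r i * g * q lam) * W lam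
        = (X i * r i) * (g * (q lam * W lam)) := by simp [mul_assoc]
    _ = e * (g * e) := by rw [hXr, hqW]
    _ = g := by rw [hg.mul_e he, hg.e_mul he]
  -- the bijection with the Rees matrix semigroup over the H-class group
  let Hty := {x : S // Hmem e x}
  letI instG : Group Hty := groupH hS he he0
  let QH : Fin nL → Fin nR → Option Hty := fun lam i =>
    if h : q lam * r i = 0 then none
    else some ⟨q lam * r i, ((hB hS h).1).trans (hqR lam), ((hB hS h).2).trans (hrL i)⟩
  have hQH_ne : ∀ (lam : Fin nL) (i : Fin nR) (h : q lam * r i ≠ 0),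
      QH lam i = some ⟨q lam * r i, ((hB hS h).1).trans (hqR lam),
        ((hB hS h).2).trans (hrL i)⟩ := fun lam i h => dif_neg h
  have hQH_0 : ∀ (lam : Fin nL) (i : Fin nR), q lam * r i = 0 → QH lam i = none :=
    fun lam i h => dif_pos h
  have hQHreg : ReesRegular QH := by
    constructor
    · intro lam
      obtain ⟨s, hs⟩ := hreg (q lam)
      have ht : s * q lam ≠ 0 := by
        intro h
        rw [mul_assoc, h, mul_zero] at hs
        exact hq0 lam hs.symm
      obtain ⟨u, hu⟩ := (hrOf (s * q lam) ht).2
      have h2 : q lam * (s * q lam) ≠ 0 := by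
        intro h
        rw [← mul_assoc, hs] at h
        exact hq0 lam h
      have hne : q lam * r (iOf (s * q lam) ht) ≠ 0 := by
        intro h
        apply h2
        rw [hu, ← mul_assoc, h, zero_mul]
      exact ⟨iOf (s * q lam) ht, by rw [hQH_ne _ _ hne]; rfl⟩
    · intro i
      obtain ⟨s, hs⟩ := hreg (r i)
      have ht : r i * s ≠ 0 := by
        intro h
        rw [h, zero_mul] at hs
        exact hr0 i hs.symm
      obtain ⟨u, hu⟩ := (hqOf (r i * s) ht).2
      have h2 : (r i * s) * r i ≠ 0 := by
        rw [hs]; exact hr0 i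
      have hne : q (lOf (r i * s) ht) * r i ≠ 0 := by
        intro h
        apply h2
        rw [hu, mul_assoc, h, mul_zero]
      exact ⟨lOf (r i * s) ht, by rw [hQH_ne _ _ hne]; rfl⟩
  let φf : S → Option (Fin nR × Hty × Fin nL) := fun a =>
    if ha : a = 0 then none else some (iOf a ha, ⟨g0 a ha, (hg0 a ha).2⟩, lOf a ha)
  let φi : Option (Fin nR × Hty × Fin nL) → S := fun o =>
    match o with
    | none => 0
    | some (i, g, lam) => r i * g.1 * q lam
  have hφf_ne : ∀ (a : S) (ha : a ≠ 0),
      φf a = some (iOf a ha, ⟨g0 a ha, (hg0 a ha).2⟩, lOf a ha) := fun a ha => dif_neg ha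
  have hφf_0 : φf 0 = none := dif_pos rfl
  have hleft : Function.LeftInverse φi φf := by
    intro a
    by_cases ha : a = 0
    · rw [ha, hφf_0]
    · rw [hφf_ne a ha]
      exact recon a ha
  have hright : Function.RightInverse φi φf := by
    intro o
    rcases o with _ | ⟨i, g, lam⟩
    · exact hφf_0
    · obtain ⟨hc0, hcR, hcL, hcg⟩ := uniq i lam g.1 g.2
      show φf (r i * g.1 * q lam) = some (i, g, lam)
      rw [hφf_ne _ hc0]
      have hi : iOf _ hc0 = i := hiOf_eq _ hc0 i hcR
      have hl : lOf _ hc0 = lam := hlOf_eq _ hc0 lam hcL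
      have hgv : g0 _ hc0 = g.1 := by
        show X (iOf _ hc0) * _ * W (lOf _ hc0) = g.1
        rw [hi, hl]
        exact hcg
      simp only [Option.some.injEq, Prod.mk.injEq]
      exact ⟨hi, Subtype.ext hgv, hl⟩
  have hmulφ : ∀ x y : S, φf (x * y) = reesMul QH (φf x) (φf y) := by
    intro x y
    by_cases hx : x = 0
    · rw [hx, zero_mul, hφf_0]
      rcases h : φf y with _ | p <;> rfl
    by_cases hy : y = 0
    · rw [hy, mul_zero, hφf_0, hφf_ne x hx]
      rfl
    rw [hφf_ne x hx, hφf_ne y hy]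
    have hx' : x = r (iOf x hx) * g0 x hx * q (lOf x hx) := (recon x hx).symm
    have hy' : y = r (iOf y hy) * g0 y hy * q (lOf y hy) := (recon y hy).symm
    have hxyval : x * y = r (iOf x hx) *
        (g0 x hx * ((q (lOf x hx) * r (iOf y hy)) * g0 y hy)) * q (lOf y hy) := by
      conv_lhs => rw [hx', hy']
      simp [mul_assoc]
    by_cases hp : q (lOf x hx) * r (iOf y hy) = 0
    · have hxy0 : x * y = 0 := by
        rw [hxyval, hp, zero_mul, mul_zero, mul_zero, zero_mul]
      rw [hxy0, hφf_0]
      have hQn : QH (lOf x hx) (iOf y hy) = none := hQH_0 _ _ hp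
      show (none : Option (Fin nR × Hty × Fin nL)) =
        (QH (lOf x hx) (iOf y hy)).map fun p =>
          (iOf x hx, (⟨g0 x hx, (hg0 x hx).2⟩ : Hty) * p * ⟨g0 y hy, (hg0 y hy).2⟩, lOf y hy)
      rw [hQn]
      rfl
    · have hpmem : Hmem e (q (lOf x hx) * r (iOf y hy)) :=
        ⟨((hB hS hp).1).trans (hqR _), ((hB hS hp).2).trans (hrL _)⟩
      have hGmem : Hmem e (g0 x hx * ((q (lOf x hx) * r (iOf y hy)) * g0 y hy)) :=
        (Hmem.mul_mem hS he he0 (hg0 x hx).2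
          (Hmem.mul_mem hS he he0 hpmem (hg0 y hy).2).2).2
      obtain ⟨hc0, hcR, hcL, hcg⟩ := uniq (iOf x hx) (lOf y hy) _ hGmem
      have hxyne : x * y ≠ 0 := by rw [hxyval]; exact hc0
      rw [hφf_ne _ hxyne]
      rw [← hxyval] at hcR hcL hcg
      have hi : iOf (x * y) hxyne = iOf x hx := hiOf_eq _ hxyne _ hcR
      have hl : lOf (x * y) hxyne = lOf y hy := hlOf_eq _ hxyne _ hcL
      have hgv : g0 (x * y) hxyne =
          g0 x hx * ((q (lOf x hx) * r (iOf y hy)) * g0 y hy) := by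
        show X (iOf (x * y) hxyne) * (x * y) * W (lOf (x * y) hxyne) = _
        rw [hi, hl]
        exact hcg
      show some (iOf (x * y) hxyne, (⟨g0 (x * y) hxyne, (hg0 _ hxyne).2⟩ : Hty),
          lOf (x * y) hxyne) = (QH (lOf x hx) (iOf y hy)).map fun p =>
          (iOf x hx, (⟨g0 x hx, (hg0 x hx).2⟩ : Hty) * p * ⟨g0 y hy, (hg0 y hy).2⟩,
          lOf y hy)
      rw [hQH_ne _ _ hp]
      simp only [Option.map_some, Option.some.injEq, Prod.mk.injEq]
      refine ⟨hi, Subtype.ext ?_, hl⟩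
      show g0 (x * y) hxyne = g0 x hx * (q (lOf x hx) * r (iOf y hy)) * g0 y hy
      rw [hgv]
      exact (mul_assoc (g0 x hx) (q (lOf x hx) * r (iOf y hy)) (g0 y hy)).symm
  let φE : S ≃ Option (Fin nR × Hty × Fin nL) := ⟨φf, φi, hleft, hright⟩
  have hmulφE : ∀ x y : S, φE (x * y) = reesMul QH (φE x) (φE y) := hmulφ
  obtain ⟨G', iG', iF', Q', hQ', ψ, hψ⟩ := transport QH hQHreg φE hmulφE
  exact ⟨nL, nR, G', iG', iF', Q', hQ', ψ, hψ⟩
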